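/- Let a locally compact abelian group G with metrizable topology act via α on a complete metric space (X, d) such that d is pseudo G-invariant, let 𝒰 = 𝒰_d be the induced uniformity and 𝒰_mix the mixed uniformity. Then for x ∈ X the following are equivalent: (i) x is Bohr-type almost periodic in (X, 𝒰) (for every U ∈ 𝒰 the set P_U(x) = {t ∈ G : (α(t,x), x) ∈ U} is relatively dense); (ii) x is Bohr-type almost periodic in (X, 𝒰_mix); (iii) x is Bochner-type almost periodic in (X, 𝒰_mix), i.e. the orbit closure of x in the 𝒰_mix-topology is compact; (iv) x is pseudo Bochner-type almost periodic in (X, 𝒰_mix), i.e. for every V ∈ 𝒰_mix the set P_V(x) is finitely relatively dense. -/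

import Mathlib

set_option linter.unusedSectionVars false
set_option maxHeartbeats 1000000


open Uniformity Pointwise Filter Topology

/-- The basic mixed entourage `V[O,U] = {(α t x, y) : t ∈ O, (x,y) ∈ U}`. -/
def mixEnt {G X : Type*} (α : G → X → X) (O : Set G) (U : Set (X × X)) : Set (X × X) :=
  {p : X × X | ∃ t ∈ O, ∃ q ∈ U, p.1 = α t q.1 ∧ p.2 = q.2}

/-- The mixed uniformity `𝒰_mix`: all supersets of some `V[O,U]` with `U ∈ 𝒰` and `O` an open
set containing `0`. -/
def mixUniformity {G X : Type*} [AddCommGroup G] [TopologicalSpace G] [UniformSpace X]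
    (α : G → X → X) : Set (Set (X × X)) :=
  {V : Set (X × X) | ∃ U ∈ 𝓤 X, ∃ O : Set G, IsOpen O ∧ (0 : G) ∈ O ∧ mixEnt α O U ⊆ V}

/-- A set is open in the topology induced by the mixed uniformity. -/
def mixOpen {G X : Type*} [AddCommGroup G] [TopologicalSpace G] [UniformSpace X]
    (α : G → X → X) (O : Set X) : Prop :=
  ∀ x ∈ O, ∃ V ∈ mixUniformity α, {y : X | (x, y) ∈ V} ⊆ O

/-- The closure of a set in the topology induced by the mixed uniformity. -/
def mixClosure {G X : Type*} [AddCommGroup G] [TopologicalSpace G] [UniformSpace X]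
    (α : G → X → X) (S : Set X) : Set X :=
  {y : X | ∀ V ∈ mixUniformity α, ∃ s ∈ S, (y, s) ∈ V}

/-- Compactness of a set in the topology induced by the mixed uniformity. -/
def mixCompact {G X : Type*} [AddCommGroup G] [TopologicalSpace G] [UniformSpace X]
    (α : G → X → X) (S : Set X) : Prop :=
  ∀ 𝒞 : Set (Set X), (∀ O ∈ 𝒞, mixOpen α O) → S ⊆ ⋃₀ 𝒞 →
    ∃ 𝒞' ⊆ 𝒞, 𝒞'.Finite ∧ S ⊆ ⋃₀ 𝒞'

section mix

variable {G X : Type*} [AddCommGroup G] [TopologicalSpace G] [IsTopologicalAddGroup G]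
  [MetricSpace X] (α : G → X → X)

lemma mixEnt_mono {O O' : Set G} {U U' : Set (X × X)} (hO : O ⊆ O') (hU : U ⊆ U') :
    mixEnt α O U ⊆ mixEnt α O' U' := by
  rintro p ⟨t, ht, q, hq, h1, h2⟩
  exact ⟨t, hO ht, q, hU hq, h1, h2⟩

variable (hzero : ∀ x, α 0 x = x) (hadd : ∀ s t x, α s (α t x) = α (s + t) x)

include hzero hadd in
lemma mem_mixEnt {O : Set G} {U : Set (X × X)} {a b : X} :
    (a, b) ∈ mixEnt α O U ↔ ∃ s ∈ O, (α (-s) a, b) ∈ U := by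
  constructor
  · rintro ⟨t, ht, q, hq, h1, h2⟩
    refine ⟨t, ht, ?_⟩
    simp only at h1 h2
    have : α (-t) a = q.1 := by rw [h1, hadd, neg_add_cancel, hzero]
    rw [this, h2]
    exact hq
  · rintro ⟨s, hs, hU⟩
    exact ⟨s, hs, (α (-s) a, b), hU, by rw [hadd, add_neg_cancel, hzero], rfl⟩

lemma mixEnt_mem_mixUniformity {O : Set G} {U : Set (X × X)} (hO : IsOpen O) (h0 : (0:G) ∈ O)
    (hU : U ∈ 𝓤 X) : mixEnt α O U ∈ mixUniformity α :=
  ⟨U, hU, O, hO, h0, subset_rfl⟩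

lemma mixUniformity_superset {V W : Set (X × X)} (hV : V ∈ mixUniformity α) (hVW : V ⊆ W) :
    W ∈ mixUniformity α := by
  obtain ⟨U, hU, O, hO, h0, hsub⟩ := hV
  exact ⟨U, hU, O, hO, h0, hsub.trans hVW⟩

/-- ε-basis form of membership. -/
lemma mixUniformity_eps {V : Set (X × X)} (hV : V ∈ mixUniformity α) :
    ∃ ε > (0:ℝ), ∃ O : Set G, IsOpen O ∧ (0:G) ∈ O ∧
      mixEnt α O {p : X × X | dist p.1 p.2 < ε} ⊆ V := by
  obtain ⟨U, hU, O, hO, h0, hsub⟩ := hV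
  obtain ⟨ε, hε, hUε⟩ := Metric.mem_uniformity_dist.1 hU
  exact ⟨ε, hε, O, hO, h0, (mixEnt_mono α subset_rfl (fun p hp => hUε hp)).trans hsub⟩

variable (hpinv : ∀ ε > (0 : ℝ), ∃ δ > (0 : ℝ), ∀ x y : X, dist x y < δ → ∀ t : G,
      dist (α t x) (α t y) < ε)

include hpinv in
lemma exists_deltafun : ∃ δf : ℝ → ℝ, ∀ ε : ℝ, 0 < ε → (0 < δf ε ∧
    ∀ x y : X, dist x y < δf ε → ∀ t : G, dist (α t x) (α t y) < ε) := by
  choose! δf h1 h2 using hpinv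
  exact ⟨δf, fun ε hε => ⟨h1 ε hε, h2 ε hε⟩⟩

/-- The mixed uniformity as a filter. -/
def mixFilter : Filter (X × X) where
  sets := mixUniformity α
  univ_sets := ⟨Set.univ, univ_mem, Set.univ, isOpen_univ, trivial, Set.subset_univ _⟩
  sets_of_superset h hsub := mixUniformity_superset α h hsub
  inter_sets := by
    rintro V W ⟨U, hU, O, hO, h0, hsub⟩ ⟨U', hU', O', hO', h0', hsub'⟩
    refine ⟨U ∩ U', inter_mem hU hU', O ∩ O', hO.inter hO', ⟨h0, h0'⟩, ?_⟩
    intro p hp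
    exact ⟨hsub (mixEnt_mono α Set.inter_subset_left Set.inter_subset_left hp),
      hsub' (mixEnt_mono α Set.inter_subset_right Set.inter_subset_right hp)⟩

lemma mem_mixFilter {V : Set (X × X)} : V ∈ mixFilter α ↔ V ∈ mixUniformity α := Iff.rfl

include hzero hadd hpinv in
/-- The mixed uniformity is a genuine uniform structure. -/
lemma mixCore_props :
    (∀ r ∈ mixFilter α, ∀ x : X, (x, x) ∈ r) ∧
    (∀ r ∈ mixFilter α, Prod.swap ⁻¹' r ∈ mixFilter α) ∧
    (∀ r ∈ mixFilter α, ∃ t ∈ mixFilter α, SetRel.comp t t ⊆ r) := by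
  obtain ⟨δf, hδf⟩ := exists_deltafun α hpinv
  refine ⟨?_, ?_, ?_⟩
  · rintro r ⟨U, hU, O, hO, h0, hsub⟩ x
    exact hsub ((mem_mixEnt α hzero hadd).2 ⟨0, h0, by
      rw [neg_zero, hzero]; exact refl_mem_uniformity hU⟩)
  · intro r hr
    obtain ⟨ε, hε, O, hO, h0, hsub⟩ := mixUniformity_eps α hr
    obtain ⟨hδpos, hδ⟩ := hδf ε hε
    refine mixUniformity_superset α
      (mixEnt_mem_mixUniformity α (hO.neg) (by simpa using h0)
        (Metric.dist_mem_uniformity hδpos)) ?_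
    rintro ⟨a, b⟩ hab
    obtain ⟨s, hs, hd⟩ := (mem_mixEnt α hzero hadd).1 hab
    simp only [Set.mem_setOf_eq] at hd
    show (b, a) ∈ r
    apply hsub
    refine (mem_mixEnt α hzero hadd).2 ⟨-s, Set.mem_neg.1 hs, ?_⟩
    simp only [Set.mem_setOf_eq, neg_neg]
    have h2 := hδ _ _ hd s
    rw [hadd, add_neg_cancel, hzero] at h2
    rw [dist_comm]
    exact h2
  · intro r hr
    obtain ⟨ε, hε, O, hO, h0, hsub⟩ := mixUniformity_eps α hr
    obtain ⟨O', hO', h0', hOO'⟩ := exists_open_nhds_zero_add_subset (hO.mem_nhds h0)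
    obtain ⟨hδpos, hδ⟩ := hδf (ε/2) (by linarith)
    set δ := min (δf (ε/2)) (ε/2) with hδdef
    have hδpos' : 0 < δ := lt_min hδpos (by linarith)
    refine ⟨mixEnt α O' {p : X × X | dist p.1 p.2 < δ},
      mixEnt_mem_mixUniformity α hO' h0' (Metric.dist_mem_uniformity hδpos'), ?_⟩
    rintro ⟨a, c⟩ ⟨b, hab, hbc⟩
    obtain ⟨s, hs, hd1⟩ := (mem_mixEnt α hzero hadd).1 hab
    obtain ⟨s', hs', hd2⟩ := (mem_mixEnt α hzero hadd).1 hbc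
    simp only [Set.mem_setOf_eq] at hd1 hd2
    apply hsub
    refine (mem_mixEnt α hzero hadd).2 ⟨s + s', hOO' (Set.add_mem_add hs hs'), ?_⟩
    simp only [Set.mem_setOf_eq]
    have h1 : dist (α (-s') (α (-s) a)) (α (-s') b) < ε/2 :=
      hδ _ _ (lt_of_lt_of_le hd1 (min_le_left _ _)) (-s')
    rw [hadd] at h1
    have : -s' + -s = -(s + s') := by abel
    rw [this] at h1
    calc dist (α (-(s+s')) a) c ≤ dist (α (-(s+s')) a) (α (-s') b) + dist (α (-s') b) c :=
          dist_triangle _ _ _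
      _ < ε/2 + δ := add_lt_add h1 hd2
      _ ≤ ε/2 + ε/2 := by have := min_le_right (δf (ε/2)) (ε/2); linarith
      _ = ε := by ring

/-- The mixed uniform structure on `X`. -/
def mixUS : UniformSpace X :=
  .ofCore (.mk' (mixFilter α) (mixCore_props α hzero hadd hpinv).1
    (mixCore_props α hzero hadd hpinv).2.1 (mixCore_props α hzero hadd hpinv).2.2)

lemma mixUS_uniformity : @uniformity X (mixUS α hzero hadd hpinv) = mixFilter α := rfl

end mix

section mix2

variable {G X : Type*} [AddCommGroup G] [TopologicalSpace G] [IsTopologicalAddGroup G]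
  [MetricSpace X] (α : G → X → X)
  (hzero : ∀ x, α 0 x = x) (hadd : ∀ s t x, α s (α t x) = α (s + t) x)
  (hpinv : ∀ ε > (0 : ℝ), ∃ δ > (0 : ℝ), ∀ x y : X, dist x y < δ → ∀ t : G,
      dist (α t x) (α t y) < ε)

lemma mixOpen_iff {S : Set X} :
    mixOpen α S ↔ @IsOpen X (mixUS α hzero hadd hpinv).toTopologicalSpace S := by
  rw [@isOpen_uniformity X (mixUS α hzero hadd hpinv)]
  constructor
  · intro h z hz
    obtain ⟨V, hV, hball⟩ := h z hz
    show _ ∈ mixFilter α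
    refine mixUniformity_superset α hV ?_
    rintro ⟨a, b⟩ hab
    intro (hza : a = z)
    exact hball (by rwa [hza] at hab)
  · intro h z hz
    refine ⟨{p : X × X | p.1 = z → p.2 ∈ S}, h z hz, ?_⟩
    intro y hy
    exact hy rfl

lemma mixClosure_eq (S : Set X) :
    mixClosure α S = @closure X (mixUS α hzero hadd hpinv).toTopologicalSpace S := by
  ext y
  show (∀ V ∈ mixUniformity α, ∃ s ∈ S, (y, s) ∈ V) ↔ _
  rw [@UniformSpace.mem_closure_iff_ball X (mixUS α hzero hadd hpinv)]
  constructor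
  · intro h V hV
    obtain ⟨s, hsS, hys⟩ := h V hV
    exact ⟨s, hys, hsS⟩
  · intro h V hV
    obtain ⟨s, hys, hsS⟩ := h hV
    exact ⟨s, hsS, hys⟩

lemma mixCompact_iff (S : Set X) :
    mixCompact α S
      ↔ @IsCompact X (mixUS α hzero hadd hpinv).toTopologicalSpace S := by
  constructor
  · intro h
    apply @isCompact_of_finite_subcover X (mixUS α hzero hadd hpinv).toTopologicalSpace
    intro ι Ucov hop hcov
    obtain ⟨𝒞', hsub, hfin, hcov'⟩ := h (Set.range Ucov)
      (by rintro O ⟨i, rfl⟩; exact (mixOpen_iff α hzero hadd hpinv).2 (hop i))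
      (by rwa [Set.sUnion_range])
    choose fi hfi using fun c : 𝒞' => (hsub c.2 : c.1 ∈ Set.range Ucov)
    haveI := hfin.to_subtype
    refine ⟨(Set.finite_range fi).toFinset, ?_⟩
    intro z hz
    obtain ⟨c, hc𝒞, hzc⟩ := hcov' hz
    refine Set.mem_biUnion ((Set.finite_range fi).mem_toFinset.2 ⟨⟨c, hc𝒞⟩, rfl⟩) ?_
    rw [hfi ⟨c, hc𝒞⟩]
    exact hzc
  · intro h 𝒞 hop hcov
    obtain ⟨t, ht⟩ := @IsCompact.elim_finite_subcover X
      (mixUS α hzero hadd hpinv).toTopologicalSpace S (↥𝒞) h (fun c => c.1)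
      (fun c => (mixOpen_iff α hzero hadd hpinv).1 (hop c.1 c.2))
      (by rwa [← Set.sUnion_eq_iUnion])
    refine ⟨(fun c : ↥𝒞 => c.1) '' ↑t, ?_, (t.finite_toSet.image _), ?_⟩
    · rintro O ⟨c, _, rfl⟩; exact c.2
    · intro z hz
      obtain ⟨c, hct, hzc⟩ := Set.mem_iUnion₂.1 (ht hz)
      exact ⟨c.1, ⟨c, hct, rfl⟩, hzc⟩

lemma mixUS_countably_generated [TopologicalSpace.MetrizableSpace G] :
    (@uniformity X (mixUS α hzero hadd hpinv)).IsCountablyGenerated := by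
  haveI : (𝓝 (0:G)).IsCountablyGenerated := by infer_instance
  obtain ⟨B, hB⟩ := (𝓝 (0:G)).exists_antitone_basis
  have hbasis : (@uniformity X (mixUS α hzero hadd hpinv)).HasBasis (fun _ : ℕ × ℕ => True)
      (fun nm => mixEnt α (interior (B nm.1)) {p : X × X | dist p.1 p.2 < 1/(nm.2+1)}) := by
    constructor
    intro V
    rw [mixUS_uniformity, mem_mixFilter]
    constructor
    · intro hV
      obtain ⟨ε, hε, O, hO, h0, hsub⟩ := mixUniformity_eps α hV
      obtain ⟨n, -, hn⟩ := hB.toHasBasis.mem_iff.1 (hO.mem_nhds h0)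
      obtain ⟨m, hm⟩ := exists_nat_one_div_lt hε
      refine ⟨(n, m), trivial, ?_⟩
      refine (mixEnt_mono α ((interior_subset).trans hn) ?_).trans hsub
      intro p hp
      exact lt_trans hp hm
    · rintro ⟨⟨n, m⟩, -, hsub⟩
      refine mixUniformity_superset α (mixEnt_mem_mixUniformity α isOpen_interior ?_
        (Metric.dist_mem_uniformity (by positivity))) hsub
      exact mem_interior_iff_mem_nhds.2 (hB.mem n)
  exact hbasis.isCountablyGenerated

end mix2

section mix3

variable {G X : Type*} [AddCommGroup G] [TopologicalSpace G] [IsTopologicalAddGroup G]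
  [MetricSpace X] (α : G → X → X)
  (hzero : ∀ x, α 0 x = x) (hadd : ∀ s t x, α s (α t x) = α (s + t) x)
  (hpinv : ∀ ε > (0 : ℝ), ∃ δ > (0 : ℝ), ∀ x y : X, dist x y < δ → ∀ t : G,
      dist (α t x) (α t y) < ε)

include hzero hadd hpinv in
lemma mixComplete [CompleteSpace X] [LocallyCompactSpace G] [T2Space G]
    [TopologicalSpace.MetrizableSpace G] :
    @CompleteSpace X (mixUS α hzero hadd hpinv) := by
  haveI := mixUS_countably_generated α hzero hadd hpinv
  apply @UniformSpace.complete_of_cauchySeq_tendsto X (mixUS α hzero hadd hpinv) _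
  intro f hf
  obtain ⟨δf, hδf⟩ := exists_deltafun α hpinv
  obtain ⟨B, hB⟩ := (𝓝 (0:G)).exists_antitone_basis
  obtain ⟨K₀, hK₀c, hK₀n⟩ := exists_compact_mem_nhds (0:G)
  -- a shrinking system of symmetric open neighbourhoods of 0
  have step : ∀ W : Set G, IsOpen W → (0:G) ∈ W → ∀ n : ℕ, ∃ W' : Set G,
      IsOpen W' ∧ (0:G) ∈ W' ∧ W' = -W' ∧ W' + W' ⊆ W ∧ W' ⊆ B n ∧ W' ⊆ W := by
    intro W hW h0 n
    have hmem : W ∩ interior (B n) ∈ 𝓝 (0:G) :=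
      Filter.inter_mem (hW.mem_nhds h0) (isOpen_interior.mem_nhds
        (mem_interior_iff_mem_nhds.2 (hB.mem n)))
    obtain ⟨V, hVopen, hV0, hVV⟩ := exists_open_nhds_zero_add_subset hmem
    have hVsub : V ⊆ W ∩ interior (B n) := fun v hv => hVV ⟨v, hv, 0, hV0, add_zero v⟩
    refine ⟨V ∩ -V, hVopen.inter hVopen.neg, ⟨hV0, by simpa using hV0⟩, ?_, ?_, ?_, ?_⟩
    · ext g
      simp only [Set.mem_inter_iff, Set.mem_neg, neg_neg]
      tauto
    · exact (Set.add_subset_add Set.inter_subset_left Set.inter_subset_left).trans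
        (hVV.trans Set.inter_subset_left)
    · exact Set.inter_subset_left.trans (hVsub.trans
        (Set.inter_subset_right.trans interior_subset))
    · exact Set.inter_subset_left.trans (hVsub.trans Set.inter_subset_left)
  choose! Wf hWo hW0 hWsymm hWadd hWB hWsub using step
  set O : ℕ → Set G := fun k => Nat.rec (interior K₀) (fun n Ok => Wf Ok (n+1)) k with hOdef
  have hOs : ∀ k, O (k+1) = Wf (O k) (k+1) := fun k => rfl
  have hOopen : ∀ k, IsOpen (O k) ∧ (0:G) ∈ O k := by
    intro k; induction k with
    | zero => exact ⟨isOpen_interior, mem_interior_iff_mem_nhds.2 hK₀n⟩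
    | succ n ih =>
      rw [hOs]
      exact ⟨hWo _ ih.1 ih.2 _, hW0 _ ih.1 ih.2 _⟩
  have hsymm : ∀ k, O (k+1) = -(O (k+1)) := fun k => hWsymm _ (hOopen k).1 (hOopen k).2 _
  have hadd2 : ∀ k, O (k+1) + O (k+1) ⊆ O k := fun k => hWadd _ (hOopen k).1 (hOopen k).2 _
  have hBsub : ∀ k, O (k+1) ⊆ B (k+1) := fun k => hWB _ (hOopen k).1 (hOopen k).2 _
  have hmono1 : ∀ k, O (k+1) ⊆ O k := fun k => hWsub _ (hOopen k).1 (hOopen k).2 _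
  have hmono : ∀ j k, j ≤ k → O k ⊆ O j := by
    intro j k h
    induction k, h using Nat.le_induction with
    | base => exact subset_rfl
    | succ k hk ih => exact (hmono1 k).trans ih
  have hbasisO : ∀ W ∈ 𝓝 (0:G), ∀ m:ℕ, 1 ≤ m → ∃ k, m ≤ k ∧ O k ⊆ W := by
    intro W hW m hm
    obtain ⟨n, -, hn⟩ := hB.toHasBasis.mem_iff.1 hW
    refine ⟨max (n+1) m, le_max_right _ _, ?_⟩
    exact (hmono (n+1) _ (le_max_left _ _)).trans ((hBsub n).trans ((hB.antitone (Nat.le_succ n)).trans hn))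
  -- extraction of a rapidly Cauchy subsequence
  have hδpos : ∀ k:ℕ, 0 < δf ((1/2:ℝ)^k) := fun k => (hδf _ (by positivity)).1
  have hVmem : ∀ k:ℕ, mixEnt α (O (k+1)) {p : X×X | dist p.1 p.2 < δf ((1/2:ℝ)^k)}
      ∈ @uniformity X (mixUS α hzero hadd hpinv) := by
    intro k
    exact mixEnt_mem_mixUniformity α (hOopen (k+1)).1 (hOopen (k+1)).2
      (Metric.dist_mem_uniformity (hδpos k))
  have hcs := (@cauchySeq_iff X (mixUS α hzero hadd hpinv) f).1 hf
  choose N hN using fun k => hcs _ (hVmem k)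
  set φ : ℕ → ℕ := fun k => Nat.rec (N 0) (fun k p => max (p+1) (N (k+1))) k with hφdef
  have hφs : StrictMono φ := strictMono_nat_of_lt_succ (fun n =>
    lt_of_lt_of_le (Nat.lt_succ_self _) (le_max_left _ _))
  have hφN : ∀ k, N k ≤ φ k := by
    intro k; cases k with
    | zero => exact le_rfl
    | succ n => exact le_max_right _ _
  set a : ℕ → X := fun k => f (φ k) with hadef
  have hpair : ∀ k, (a k, a (k+1)) ∈ mixEnt α (O (k+1))
      {p : X×X | dist p.1 p.2 < δf ((1/2:ℝ)^k)} := by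
    intro k
    exact hN k _ (hφN k) _ (le_trans (hφN k) (hφs.monotone (Nat.le_succ k)))
  choose s hsO hsd using fun k => (mem_mixEnt α hzero hadd).1 (hpair k)
  simp only [Set.mem_setOf_eq] at hsd
  set Sg : ℕ → ℕ → G := fun n m => ∑ j ∈ Finset.Ico n m, s j with hSgdef
  have hSgsucc : ∀ n m, n ≤ m → Sg n (m+1) = Sg n m + s m :=
    fun n m h => Finset.sum_Ico_succ_top h _
  set q : ℕ → X := fun k => α (Sg 0 k) (a k) with hqdef
  have hqd : ∀ k, dist (q k) (q (k+1)) < (1/2:ℝ)^k := by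
    intro k
    have h := (hδf ((1/2:ℝ)^k) (by positivity)).2 _ _ (hsd k) (Sg 0 (k+1))
    rw [hadd] at h
    have e : Sg 0 (k+1) + -(s k) = Sg 0 k := by
      rw [hSgsucc 0 k (Nat.zero_le k)]; abel
    rw [e] at h
    exact h
  have hqc : CauchySeq q := cauchySeq_of_le_geometric_two (C := 2) (fun n => by
    have h := (hqd n).le
    have e : (1/2:ℝ)^n = 2/2/2^n := by
      rw [div_pow, one_pow]; norm_num
    rw [e] at h; exact h)
  obtain ⟨y₀, hy₀⟩ := cauchySeq_tendsto_of_complete hqc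
  have hqdist : ∀ k, dist (q k) y₀ ≤ 2/2^k :=
    dist_le_of_le_geometric_two_of_tendsto (C := 2) (fun n => by
      have h := (hqd n).le
      have e : (1/2:ℝ)^n = 2/2/2^n := by rw [div_pow, one_pow]; norm_num
      rw [e] at h; exact h) hy₀
  -- partial sums lie in the shrinking neighbourhoods
  have hsum : ∀ k n, Sg n (n+k+1) ∈ O n := by
    intro k
    induction k with
    | zero =>
      intro n
      have e : Sg n (n+0+1) = s n := by
        show (∑ j ∈ Finset.Ico n (n+0+1), s j) = s n
        rw [show n+0+1 = n+1 by omega, Finset.sum_Ico_succ_top (le_refl n),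
          Finset.Ico_self, Finset.sum_empty, zero_add]
      rw [e]
      exact hmono1 n (hsO n)
    | succ k ih =>
      intro n
      have h1 : n < n+(k+1)+1 := by omega
      have e : Sg n (n+(k+1)+1) = s n + Sg (n+1) (n+(k+1)+1) :=
        Finset.sum_eq_sum_Ico_succ_bot h1 _
      have h2 : Sg (n+1) ((n+1)+k+1) ∈ O (n+1) := ih (n+1)
      rw [show (n+1)+k+1 = n+(k+1)+1 by omega] at h2
      rw [e]
      exact hadd2 n (Set.add_mem_add (hsO n) h2)
  have hsum' : ∀ n m, n ≤ m → Sg n m ∈ O n := by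
    intro n m h
    rcases eq_or_lt_of_le h with rfl | hlt
    · show (∑ j ∈ Finset.Ico n n, s j) ∈ O n
      rw [Finset.Ico_self, Finset.sum_empty]
      exact (hOopen n).2
    · obtain ⟨k, rfl⟩ : ∃ k, m = n+k+1 := ⟨m-n-1, by omega⟩
      exact hsum k n
  -- a limit for the shifts in G
  set v : ℕ → G := fun j => Sg 0 (j+1) with hvdef
  have hv : ∀ j, v j ∈ ({s 0} : Set G) + K₀ := by
    intro j
    have h1 : Sg 0 (j+1) = s 0 + Sg 1 (j+1) := Finset.sum_eq_sum_Ico_succ_bot (by omega) _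
    have h2 : Sg 1 (j+1) ∈ O 1 := hsum' 1 (j+1) (by omega)
    exact ⟨s 0, rfl, Sg 1 (j+1), interior_subset (hmono 0 1 (by omega) h2), h1.symm⟩
  obtain ⟨σ, hσmem, ψ, hψ, hψconv⟩ := (isCompact_singleton.add hK₀c).isSeqCompact hv
  -- the limit point
  refine ⟨α (-σ) y₀, ?_⟩
  refine @tendsto_nhds_of_cauchySeq_of_subseq X ℕ (mixUS α hzero hadd hpinv) _ f hf ℕ φ
    Filter.atTop _ hφs.tendsto_atTop _ ?_
  rw [Filter.tendsto_def]
  intro S hS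
  obtain ⟨V, hV, hball⟩ := (@UniformSpace.mem_nhds_iff X (mixUS α hzero hadd hpinv) _ _).1 hS
  obtain ⟨ε, hε, Ost, hOst, h0st, hsubst⟩ := mixUniformity_eps α hV
  -- (a) eventually the translate of y₀ is ε-close to a m
  obtain ⟨M1, hM1⟩ : ∃ M1:ℕ, ∀ m ≥ M1, (2:ℝ)/2^m < δf ε := by
    have ht : Filter.Tendsto (fun m:ℕ => (2:ℝ)/2^m) Filter.atTop (𝓝 0) :=
      Filter.Tendsto.div_atTop tendsto_const_nhds
        (tendsto_pow_atTop_atTop_of_one_lt (by norm_num : (1:ℝ) < 2))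
    exact Filter.eventually_atTop.1 (ht.eventually (gt_mem_nhds (hδf ε hε).1))
  have hA : ∀ m ≥ M1, dist (α (-(Sg 0 m)) y₀) (a m) < ε := by
    intro m hm
    have h := (hδf ε hε).2 (q m) y₀ (lt_of_le_of_lt (hqdist m) (hM1 m hm)) (-(Sg 0 m))
    have e : α (-(Sg 0 m)) (q m) = a m := by
      show α (-(Sg 0 m)) (α (Sg 0 m) (a m)) = a m
      rw [hadd, neg_add_cancel, hzero]
    rw [e] at h
    rw [dist_comm]
    exact h
  -- (b) eventually the shift is in Ost
  obtain ⟨W', hW'o, hW'0, hW'add⟩ := exists_open_nhds_zero_add_subset (hOst.mem_nhds h0st)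
  obtain ⟨M2, hM2ge1, hM2sub⟩ := hbasisO W' (hW'o.mem_nhds hW'0) 1 (le_refl 1)
  have hBshift : ∀ m ≥ M2, Sg 0 m - σ ∈ Ost := by
    intro m hm
    have hcont : Continuous (fun g : G => g - σ) := continuous_id.sub continuous_const
    have hev : ∀ᶠ j in Filter.atTop, v (ψ j) - σ ∈ W' :=
      hψconv.eventually ((hW'o.preimage hcont).mem_nhds (by simp [hW'0]))
    obtain ⟨j, hjW, hjm⟩ := (hev.and (Filter.eventually_ge_atTop m)).exists
    have hψj : m ≤ ψ j + 1 := le_trans hjm (le_trans hψ.le_apply (Nat.le_succ _))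
    have hsplit : v (ψ j) = Sg 0 m + Sg m (ψ j + 1) :=
      (Finset.sum_Ico_consecutive _ (Nat.zero_le m) hψj).symm
    have htail : Sg m (ψ j + 1) ∈ O m := hsum' m (ψ j + 1) hψj
    have hOm : O m ⊆ W' := (hmono M2 m hm).trans hM2sub
    have hneg : -(Sg m (ψ j+1)) ∈ O m := by
      obtain ⟨m', rfl⟩ : ∃ m', m = m'+1 := ⟨m-1, by omega⟩
      rw [hsymm m']
      exact Set.neg_mem_neg.2 htail
    apply hW'add
    have e : Sg 0 m - σ = (v (ψ j) - σ) + (-(Sg m (ψ j+1))) := by rw [hsplit]; abel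
    rw [e]
    exact Set.add_mem_add hjW (hOm hneg)
  -- combine
  rw [Filter.mem_atTop_sets]
  refine ⟨max M1 M2, fun m hm => ?_⟩
  apply hball
  show (α (-σ) y₀, f (φ m)) ∈ V
  apply hsubst
  refine (mem_mixEnt α hzero hadd).2 ⟨Sg 0 m - σ, hBshift m (le_trans (le_max_right _ _) hm), ?_⟩
  have e : α (-(Sg 0 m - σ)) (α (-σ) y₀) = α (-(Sg 0 m)) y₀ := by
    rw [hadd]
    congr 1
    abel
  rw [Set.mem_setOf_eq, e]
  exact hA m (le_trans (le_max_left _ _) hm)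

end mix3

/-- Let a metrizable locally compact abelian group `G` act via `α` on a
complete metric space `(X, d)` with `d` pseudo `G`-invariant, and let `𝒰 = 𝒰_d` be the
induced uniformity. Then Bohr-type almost periodicity in `(X, 𝒰)`, Bohr-type almost
periodicity in `(X, 𝒰_mix)`, Bochner-type almost periodicity in `(X, 𝒰_mix)` and pseudo
Bochner-type almost periodicity in `(X, 𝒰_mix)` are all equivalent. -/
theorem stmt15 {G X : Type*}
    [AddCommGroup G] [TopologicalSpace G] [IsTopologicalAddGroup G]
    [LocallyCompactSpace G] [T2Space G] [TopologicalSpace.MetrizableSpace G]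
    [MetricSpace X] [CompleteSpace X]
    (α : G → X → X)
    (hzero : ∀ x, α 0 x = x)
    (hadd : ∀ s t x, α s (α t x) = α (s + t) x)
    -- the metric is pseudo `G`-invariant
    (hpinv : ∀ ε > (0 : ℝ), ∃ δ > (0 : ℝ), ∀ x y : X, dist x y < δ → ∀ t : G,
      dist (α t x) (α t y) < ε)
    (x : X) :
    List.TFAE
      [ -- (i) Bohr-type almost periodic in `(X, 𝒰)`
        ∀ U ∈ 𝓤 X, ∃ K : Set G, IsCompact K ∧ {t : G | (α t x, x) ∈ U} + K = Set.univ,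
        -- (ii) Bohr-type almost periodic in `(X, 𝒰_mix)`
        ∀ V ∈ mixUniformity α, ∃ K : Set G, IsCompact K ∧
          {t : G | (α t x, x) ∈ V} + K = Set.univ,
        -- (iii) Bochner-type almost periodic in `(X, 𝒰_mix)`: the orbit closure in the
        -- `𝒰_mix`-topology is compact
        mixCompact α (mixClosure α (Set.range fun t : G => α t x)),
        -- (iv) pseudo Bochner-type almost periodic in `(X, 𝒰_mix)`
        ∀ V ∈ mixUniformity α, ∃ F : Set G, F.Finite ∧
          {t : G | (α t x, x) ∈ V} + F = Set.univ ] := by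
  classical
  obtain ⟨δf, hδf⟩ := exists_deltafun α hpinv
  tfae_have 1 → 2 := by
    intro h1 V hV
    obtain ⟨U, hU, O, hO, h0, hsub⟩ := hV
    obtain ⟨K, hK, hKeq⟩ := h1 U hU
    refine ⟨K, hK, ?_⟩
    rw [Set.eq_univ_iff_forall] at hKeq ⊢
    intro g
    obtain ⟨p, hp, k, hk, hpk⟩ := Set.mem_add.1 (hKeq g)
    refine Set.mem_add.2 ⟨p, ?_, k, hk, hpk⟩
    show (α p x, x) ∈ V
    exact hsub ((mem_mixEnt α hzero hadd).2 ⟨0, h0, by rw [neg_zero, hzero]; exact hp⟩)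
  tfae_have 2 → 4 := by
    intro h2 V hV
    obtain ⟨ε, hε, O, hO, h0, hsub⟩ := mixUniformity_eps α hV
    obtain ⟨O₁, hO₁o, hO₁0, hO₁add⟩ := exists_open_nhds_zero_add_subset (hO.mem_nhds h0)
    obtain ⟨K, hKc, hKeq⟩ := h2 (mixEnt α O₁ {p : X × X | dist p.1 p.2 < ε})
      (mixEnt_mem_mixUniformity α hO₁o hO₁0 (Metric.dist_mem_uniformity hε))
    obtain ⟨t, ht⟩ := hKc.elim_finite_subcover (fun g : G => {g} + O₁)
      (fun _ => hO₁o.add_left)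
      (fun k _ => Set.mem_iUnion.2 ⟨k, k, rfl, 0, hO₁0, add_zero k⟩)
    refine ⟨↑t, t.finite_toSet, ?_⟩
    rw [Set.eq_univ_iff_forall] at hKeq ⊢
    intro g
    obtain ⟨p, hp, k, hk, hpk⟩ := Set.mem_add.1 (hKeq g)
    obtain ⟨s1, hs1, hds⟩ := (mem_mixEnt α hzero hadd).1 hp
    obtain ⟨g₁, hg₁t, hkg⟩ := Set.mem_iUnion₂.1 (ht hk)
    obtain ⟨g₁', hg₁', o₂, ho₂, hko⟩ := Set.mem_add.1 hkg
    refine Set.mem_add.2 ⟨p + o₂, ?_, g₁, hg₁t, ?_⟩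
    · show (α (p + o₂) x, x) ∈ V
      apply hsub
      refine (mem_mixEnt α hzero hadd).2 ⟨s1 + o₂, hO₁add (Set.add_mem_add hs1 ho₂), ?_⟩
      have e : α (-(s1 + o₂)) (α (p + o₂) x) = α (-s1) (α p x) := by
        rw [hadd, hadd]; congr 1; abel
      rw [Set.mem_setOf_eq, e]
      exact hds
    · rw [← hpk, ← hko, Set.mem_singleton_iff.1 hg₁']
      abel
  tfae_have 4 → 1 := by
    intro h4 U hU
    obtain ⟨ε, hε, hUε⟩ := Metric.mem_uniformity_dist.1 hU
    obtain ⟨K₀, hK₀c, hK₀n⟩ := exists_compact_mem_nhds (0:G)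
    obtain ⟨F, hFfin, hFeq⟩ := h4 (mixEnt α (interior K₀) {p : X × X | dist p.1 p.2 < ε})
      (mixEnt_mem_mixUniformity α isOpen_interior (mem_interior_iff_mem_nhds.2 hK₀n)
        (Metric.dist_mem_uniformity hε))
    refine ⟨closure (interior K₀) + F,
      (hK₀c.of_isClosed_subset isClosed_closure
        (closure_minimal interior_subset hK₀c.isClosed)).add hFfin.isCompact, ?_⟩
    rw [Set.eq_univ_iff_forall] at hFeq ⊢
    intro g
    obtain ⟨p, hp, k, hkF, hpk⟩ := Set.mem_add.1 (hFeq g)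
    obtain ⟨s, hs, hds⟩ := (mem_mixEnt α hzero hadd).1 hp
    refine Set.mem_add.2 ⟨p - s, ?_, s + k,
      Set.add_mem_add (subset_closure hs) hkF, by rw [← hpk]; abel⟩
    show (α (p - s) x, x) ∈ U
    apply hUε
    have e : α (-s) (α p x) = α (p - s) x := by rw [hadd]; congr 1; abel
    rw [Set.mem_setOf_eq, e] at hds
    exact hds
  tfae_have 4 → 3 := by
    intro h4
    rw [mixCompact_iff α hzero hadd hpinv, mixClosure_eq α hzero hadd hpinv,
      @isCompact_iff_totallyBounded_isComplete X (mixUS α hzero hadd hpinv)]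
    constructor
    · apply @TotallyBounded.closure X (mixUS α hzero hadd hpinv)
      show ∀ d ∈ @uniformity X (mixUS α hzero hadd hpinv), ∃ t : Set X, t.Finite ∧
        (Set.range fun t : G => α t x) ⊆ ⋃ y ∈ t, {z : X | (z, y) ∈ d}
      intro d hd
      obtain ⟨ε, hε, O, hO, h0, hsub⟩ := mixUniformity_eps α hd
      obtain ⟨F, hFfin, hFeq⟩ := h4 (mixEnt α O {p : X × X | dist p.1 p.2 < δf ε})
        (mixEnt_mem_mixUniformity α hO h0 (Metric.dist_mem_uniformity (hδf ε hε).1))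
      refine ⟨(fun g => α g x) '' F, hFfin.image _, ?_⟩
      rintro z ⟨τ, rfl⟩
      rw [Set.eq_univ_iff_forall] at hFeq
      obtain ⟨p, hp, f0, hf0, hpf⟩ := Set.mem_add.1 (hFeq τ)
      obtain ⟨s, hs, hds⟩ := (mem_mixEnt α hzero hadd).1 hp
      refine Set.mem_biUnion (Set.mem_image_of_mem _ hf0) ?_
      show (α τ x, α f0 x) ∈ d
      apply hsub
      refine (mem_mixEnt α hzero hadd).2 ⟨s, hs, ?_⟩
      rw [Set.mem_setOf_eq] at hds ⊢
      have h := (hδf ε hε).2 _ _ hds f0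
      rw [hadd, hadd] at h
      have e1 : α (-s) (α τ x) = α (f0 + -s + p) x := by
        rw [hadd, ← hpf]; congr 1; abel
      rw [e1]
      exact h
    · exact @IsClosed.isComplete X (mixUS α hzero hadd hpinv)
        (mixComplete α hzero hadd hpinv) _
        (@isClosed_closure X (mixUS α hzero hadd hpinv).toTopologicalSpace _)
  tfae_have 3 → 4 := by
    intro h3 V hV
    obtain ⟨ε, hε, O, hO, h0, hsub⟩ := mixUniformity_eps α hV
    obtain ⟨O₁, hO₁o, hO₁0, hO₁add⟩ := exists_open_nhds_zero_add_subset (hO.mem_nhds h0)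
    set O' : Set G := O₁ ∩ -O₁ with hO'def
    have hO'o : IsOpen O' := hO₁o.inter hO₁o.neg
    have hO'0 : (0:G) ∈ O' := ⟨hO₁0, by simpa using hO₁0⟩
    set W : Set (X × X) := mixEnt α O' {p : X × X | dist p.1 p.2 < δf ε / 2} with hWdef
    have hWmem : W ∈ mixUniformity α :=
      mixEnt_mem_mixUniformity α hO'o hO'0
        (Metric.dist_mem_uniformity (by have := (hδf ε hε).1; linarith))
    have hC := (mixCompact_iff α hzero hadd hpinv _).1 h3
    rw [mixClosure_eq α hzero hadd hpinv] at hC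
    have hTB := @IsCompact.totallyBounded X (mixUS α hzero hadd hpinv) _ hC
    obtain ⟨t, htfin, hcov⟩ := hTB W hWmem
    set rep : X → G := fun y => if h : ∃ τ : G, (α τ x, y) ∈ W then h.choose else 0 with hrepdef
    refine ⟨rep '' t, htfin.image _, ?_⟩
    rw [Set.eq_univ_iff_forall]
    intro g
    have horb : α g x ∈ @closure X (mixUS α hzero hadd hpinv).toTopologicalSpace
        (Set.range fun t : G => α t x) := by
      have hmemo : α g x ∈ (Set.range fun t : G => α t x) := ⟨g, rfl⟩
      exact @subset_closure X (mixUS α hzero hadd hpinv).toTopologicalSpace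
        (Set.range fun t : G => α t x) (α g x) hmemo
    obtain ⟨y, hyt, hgy⟩ := Set.mem_iUnion₂.1 (hcov horb)
    have hgy' : (α g x, y) ∈ W := hgy
    have hex : ∃ τ : G, (α τ x, y) ∈ W := ⟨g, hgy'⟩
    have hrep : (α (rep y) x, y) ∈ W := by
      rw [hrepdef]
      simp only [dif_pos hex]
      exact hex.choose_spec
    obtain ⟨s1, hs1, hd1⟩ := (mem_mixEnt α hzero hadd).1 hgy'
    obtain ⟨s2, hs2, hd2⟩ := (mem_mixEnt α hzero hadd).1 hrep
    refine Set.mem_add.2 ⟨g - rep y, ?_, rep y, Set.mem_image_of_mem rep hyt, by abel⟩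
    show (α (g - rep y) x, x) ∈ V
    apply hsub
    have hmem : s1 - s2 ∈ O := by
      rw [sub_eq_add_neg]
      exact hO₁add (Set.add_mem_add hs1.1 (Set.mem_neg.1 hs2.2))
    refine (mem_mixEnt α hzero hadd).2 ⟨s1 - s2, hmem, ?_⟩
    rw [Set.mem_setOf_eq] at hd1 hd2 ⊢
    have e1 : α (-s1) (α g x) = α (g - s1) x := by rw [hadd]; congr 1; abel
    have e2 : α (-s2) (α (rep y) x) = α (rep y - s2) x := by rw [hadd]; congr 1; abel
    rw [e1] at hd1
    rw [e2] at hd2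
    have htri : dist (α (g - s1) x) (α (rep y - s2) x) < δf ε := by
      calc dist (α (g - s1) x) (α (rep y - s2) x)
          ≤ dist (α (g - s1) x) y + dist y (α (rep y - s2) x) := dist_triangle _ _ _
        _ < δf ε / 2 + δf ε / 2 := add_lt_add hd1 (by rw [dist_comm]; exact hd2)
        _ = δf ε := by ring
    have h := (hδf ε hε).2 _ _ htri (s2 - rep y)
    rw [hadd, hadd] at h
    have e3 : α (-(s1 - s2)) (α (g - rep y) x) = α (s2 - rep y + (g - s1)) x := by
      rw [hadd]; congr 1; abel
    have e4 : α (s2 - rep y + (rep y - s2)) x = x := by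
      rw [show s2 - rep y + (rep y - s2) = 0 by abel, hzero]
    rw [e4] at h
    rw [e3]
    exact h
  tfae_finish
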